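/- With G > 0, the functions w(r)² = N(r) = 1 - r²/G satisfy the relation N·(w')² + V = (Λ/G)r² with V = (1-w²)²/(2r²) precisely when Λ = 3/(2G). -/

import Mathlib

open Set

theorem stmt_2 (G Λ : ℝ) (hG : 0 < G)
    (N w V : ℝ → ℝ)
    (hN : ∀ r : ℝ, N r = 1 - r ^ 2 / G)
    (hw : ∀ r : ℝ, w r = Real.sqrt (1 - r ^ 2 / G))
    (hV : ∀ r : ℝ, V r = (1 - (w r) ^ 2) ^ 2 / (2 * r ^ 2)) :
    (∀ r ∈ Ioo 0 (Real.sqrt G),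
        N r * (deriv w r) ^ 2 + V r = (Λ / G) * r ^ 2) ↔ Λ = 3 / (2 * G) := by
  have hwfun : w = fun x => Real.sqrt (1 - x ^ 2 / G) := funext hw
  have key : ∀ r ∈ Ioo 0 (Real.sqrt G),
      N r * (deriv w r) ^ 2 + V r = 3 / (2 * G ^ 2) * r ^ 2 := by
    intro r hr
    obtain ⟨hr0, hr1⟩ := hr
    have hG2 : r ^ 2 < G := by
      nlinarith [Real.sq_sqrt hG.le, Real.sqrt_nonneg G]
    have hpos : 0 < 1 - r ^ 2 / G := by
      rw [sub_pos, div_lt_one hG]; exact hG2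
    have hsq : Real.sqrt (1 - r ^ 2 / G) ^ 2 = 1 - r ^ 2 / G :=
      Real.sq_sqrt hpos.le
    have hsqpos : 0 < Real.sqrt (1 - r ^ 2 / G) := Real.sqrt_pos.mpr hpos
    have hinner : HasDerivAt (fun x : ℝ => 1 - x ^ 2 / G) (-(2 * r) / G) r := by
      have h1 : HasDerivAt (fun x : ℝ => x ^ 2) (2 * r) r := by
        simpa using hasDerivAt_pow 2 r
      have h2 := (h1.div_const G).const_sub 1
      simpa [neg_div] using h2
    have hd : HasDerivAt w (-(2 * r) / G / (2 * Real.sqrt (1 - r ^ 2 / G))) r := by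
      rw [hwfun]
      exact hinner.sqrt (ne_of_gt hpos)
    have hr0' : r ≠ 0 := ne_of_gt hr0
    have hne1 : (1 : ℝ) - r ^ 2 / G ≠ 0 := hpos.ne'
    have hne2 : G - r ^ 2 ≠ 0 := by nlinarith
    have e1 : (-(2 * r) / G / (2 * Real.sqrt (1 - r ^ 2 / G))) ^ 2
        = r ^ 2 / (G ^ 2 * (1 - r ^ 2 / G)) := by
      rw [div_pow, mul_pow, hsq]
      field_simp
    rw [hd.deriv, hN, hV, hw, hsq, e1]
    field_simp
    ring
  constructor
  · intro h
    set r := Real.sqrt G / 2 with hrdef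
    have hrpos : 0 < Real.sqrt G := Real.sqrt_pos.mpr hG
    have hmem : r ∈ Ioo 0 (Real.sqrt G) := ⟨by positivity, by linarith⟩
    have h1 := h r hmem
    have h2 := key r hmem
    have hr2 : r ^ 2 ≠ 0 := by positivity
    have hc : Λ / G = 3 / (2 * G ^ 2) :=
      mul_right_cancel₀ hr2 (h1.symm.trans h2)
    field_simp at hc ⊢
    nlinarith [hc, hG]
  · intro h r hr
    rw [key r hr, h, div_div]
    ring_nf
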